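/- arXiv:2102.11775 — 4 statements merged into one kernel-verified Lean document; each statement's English description precedes it below -/
import Mathlib

section
/- Let E be a nonempty finite state space and G an irreducible generator of a continuous-time Markov process on E, and let Π_t = exp(tG). Then there exists a probability distribution α on E (a row vector with nonnegative entries summing to 1) such that for every pair i, j ∈ E, the matrix entry Π_t(i,j) = exp(tG)(i,j) converges to α(j) as t → ∞; in particular the limit is independent of the starting state i. -/
open Matrix Filter Topology

/-- A generator (Q-matrix) on a finite state space: nonnegative off-diagonal
entries and zero row sums. -/
def IsGenerator {E : Type*} [Fintype E] (G : Matrix E E ℝ) : Prop :=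
  (∀ i j, i ≠ j → 0 ≤ G i j) ∧ (∀ i, ∑ j, G i j = 0)

/-- Irreducibility of a generator: any state can be reached from any other
state through a chain with nonvanishing product of matrix entries. -/
def GenIrreducible {E : Type*} [Fintype E] (G : Matrix E E ℝ) : Prop :=
  ∀ i j : E, ∃ N : ℕ, 1 ≤ N ∧ ∃ k : ℕ → E, k 0 = i ∧ k N = j ∧
    ∏ l ∈ Finset.range N, G (k l) (k (l + 1)) ≠ 0

section Helpers


open NormedSpace

attribute [local instance] Matrix.linftyOpNormedRing Matrix.linftyOpNormedAlgebra

variable {E : Type*} [Fintype E] [DecidableEq E] [Nonempty E]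

noncomputable def entryLM (i j : E) : Matrix E E ℝ →ₗ[ℝ] ℝ where
  toFun A := A i j
  map_add' _ _ := rfl
  map_smul' _ _ := rfl

noncomputable def rowsumLM (i : E) : Matrix E E ℝ →ₗ[ℝ] ℝ where
  toFun A := ∑ j, A i j
  map_add' A B := by simp [Finset.sum_add_distrib]
  map_smul' r A := by simp [Finset.mul_sum]

lemma lm_exp (f : Matrix E E ℝ →ₗ[ℝ] ℝ) (A : Matrix E E ℝ) :
    f (exp A) = ∑' n : ℕ, ((n.factorial : ℝ)⁻¹ * f (A ^ n)) := by
  have hc : Continuous f := f.continuous_of_finiteDimensional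
  have hs : Summable fun n : ℕ => ((n.factorial : ℝ)⁻¹ : ℝ) • A ^ n := expSeries_summable' A
  have := ((⟨f, hc⟩ : Matrix E E ℝ →L[ℝ] ℝ).map_tsum hs)
  rw [exp_eq_tsum (𝕂 := ℝ)]
  simpa [smul_eq_mul] using this

lemma lm_exp_summable (f : Matrix E E ℝ →ₗ[ℝ] ℝ) (A : Matrix E E ℝ) :
    Summable fun n : ℕ => ((n.factorial : ℝ)⁻¹ * f (A ^ n)) := by
  have hc : Continuous f := f.continuous_of_finiteDimensional
  have hs : Summable fun n : ℕ => ((n.factorial : ℝ)⁻¹ : ℝ) • A ^ n := expSeries_summable' A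
  have := hs.map (⟨f, hc⟩ : Matrix E E ℝ →L[ℝ] ℝ) hc
  simpa [Function.comp_def, smul_eq_mul] using this

lemma pow_entry_nonneg {A : Matrix E E ℝ} (h : ∀ i j, 0 ≤ A i j) (n : ℕ) :
    ∀ i j, 0 ≤ (A ^ n) i j := by
  induction n with
  | zero => intro i j; by_cases hij : i = j <;> simp [hij, Matrix.one_apply]
  | succ n ih =>
    intro i j
    rw [pow_succ, Matrix.mul_apply]
    exact Finset.sum_nonneg fun k _ => mul_nonneg (ih i k) (h k j)

lemma pow_entry_ge_prod {A : Matrix E E ℝ} (h : ∀ i j, 0 ≤ A i j) (N : ℕ) (k : ℕ → E) :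
    ∏ l ∈ Finset.range N, A (k l) (k (l + 1)) ≤ (A ^ N) (k 0) (k N) := by
  induction N with
  | zero => simp [Matrix.one_apply]
  | succ N ih =>
    rw [Finset.prod_range_succ, pow_succ, Matrix.mul_apply]
    calc (∏ l ∈ Finset.range N, A (k l) (k (l + 1))) * A (k N) (k (N + 1))
        ≤ (A ^ N) (k 0) (k N) * A (k N) (k (N + 1)) :=
          mul_le_mul_of_nonneg_right ih (h _ _)
      _ ≤ ∑ m, (A ^ N) (k 0) m * A m (k (N + 1)) := by
          exact Finset.single_le_sum (f := fun m => (A ^ N) (k 0) m * A m (k (N + 1)))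
            (fun m _ => mul_nonneg (pow_entry_nonneg h N _ _) (h _ _)) (Finset.mem_univ (k N))

lemma exp_entry_nonneg {A : Matrix E E ℝ} (h : ∀ i j, 0 ≤ A i j) (i j : E) :
    0 ≤ exp A i j := by
  have := lm_exp (entryLM i j) A
  simp only [entryLM, LinearMap.coe_mk, AddHom.coe_mk] at this
  rw [show exp A i j = ∑' n : ℕ, ((n.factorial : ℝ)⁻¹ * (A ^ n) i j) from this]
  exact tsum_nonneg fun n => mul_nonneg (by positivity) (pow_entry_nonneg h n i j)

lemma exp_sub_smul_one (B : Matrix E E ℝ) (r : ℝ) :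
    exp (B - r • (1 : Matrix E E ℝ)) = Real.exp (-r) • exp B := by
  have hc : Commute (B - r • (1 : Matrix E E ℝ)) (r • (1 : Matrix E E ℝ)) := by
    apply Commute.sub_left
    · exact (Commute.smul_right (Commute.one_right B) r)
    · exact Commute.smul_left (Commute.smul_right rfl r) r
  have h1 : exp (B - r • (1 : Matrix E E ℝ) + r • (1 : Matrix E E ℝ)) =
      exp (B - r • (1 : Matrix E E ℝ)) * exp (r • (1 : Matrix E E ℝ)) :=
    Matrix.exp_add_of_commute _ _ hc
  have h2 : exp (r • (1 : Matrix E E ℝ)) = Real.exp r • (1 : Matrix E E ℝ) := by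
    rw [Matrix.smul_one_eq_diagonal, Matrix.exp_diagonal]
    rw [Matrix.smul_one_eq_diagonal]
    congr 1
    rw [Pi.exp_def]
    funext x
    simp [← Real.exp_eq_exp_ℝ]
  rw [sub_add_cancel, h2] at h1
  rw [mul_smul_comm, mul_one] at h1
  rw [h1, smul_smul, ← Real.exp_add, neg_add_cancel, Real.exp_zero, one_smul]

lemma exp_rowsum {B : Matrix E E ℝ} (hB : ∀ i, ∑ j, B i j = 0) (i : E) :
    ∑ j, exp B i j = 1 := by
  have key := lm_exp (rowsumLM i) B
  simp only [rowsumLM, LinearMap.coe_mk, AddHom.coe_mk] at key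
  have hrow : ∀ n : ℕ, ∀ i : E, ∑ j, (B ^ (n + 1)) i j = 0 := by
    intro n i
    rw [pow_succ]
    simp only [Matrix.mul_apply]
    rw [Finset.sum_comm]
    rw [show ∑ k, ∑ j, (B ^ n) i k * B k j = ∑ k, (B ^ n) i k * ∑ j, B k j by
      simp [Finset.mul_sum]]
    simp [hB]
  rw [key, tsum_eq_single 0]
  · simp [Matrix.one_apply, Finset.sum_ite_eq' (Finset.univ : Finset E)]
  · intro n hn
    obtain ⟨m, rfl⟩ := Nat.exists_eq_succ_of_ne_zero hn
    rw [hrow m i, mul_zero]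

lemma exp_entry_pos {A : Matrix E E ℝ} (h : ∀ i j, 0 ≤ A i j) {i j : E}
    (N : ℕ) (k : ℕ → E) (h0 : k 0 = i) (hN : k N = j)
    (hp : 0 < ∏ l ∈ Finset.range N, A (k l) (k (l + 1))) :
    0 < exp A i j := by
  have key := lm_exp (entryLM i j) A
  simp only [entryLM, LinearMap.coe_mk, AddHom.coe_mk] at key
  have hsum := lm_exp_summable (entryLM i j) A
  simp only [entryLM, LinearMap.coe_mk, AddHom.coe_mk] at hsum
  rw [show exp A i j = ∑' n : ℕ, ((n.factorial : ℝ)⁻¹ * (A ^ n) i j) from key]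
  have hterm : 0 < (N.factorial : ℝ)⁻¹ * (A ^ N) i j := by
    have : 0 < (A ^ N) i j := by
      rw [← h0, ← hN]; exact lt_of_lt_of_le hp (pow_entry_ge_prod h N k)
    positivity
  refine lt_of_lt_of_le hterm (hsum.le_tsum N fun n _ =>
    mul_nonneg (by positivity) (pow_entry_nonneg h n i j))

lemma gen_exp_decomp (G : Matrix E E ℝ) (c t : ℝ) :
    exp (t • G) = Real.exp (-(t * c)) • exp (t • (G + c • (1 : Matrix E E ℝ))) := by
  have key : t • (G + c • (1 : Matrix E E ℝ)) - (t * c) • (1 : Matrix E E ℝ) = t • G := by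
    rw [smul_add, smul_smul, add_sub_cancel_right]
  rw [← key, exp_sub_smul_one]

noncomputable def cG (G : Matrix E E ℝ) : ℝ :=
  1 + Finset.univ.sup' Finset.univ_nonempty fun i => -G i i

lemma AG_nonneg {G : Matrix E E ℝ} (hG : IsGenerator G) (i j : E) :
    0 ≤ (G + cG G • (1 : Matrix E E ℝ)) i j := by
  simp only [Matrix.add_apply, Matrix.smul_apply, Matrix.one_apply, smul_eq_mul, if_true]
  by_cases hij : i = j
  · subst hij
    rw [if_pos rfl]
    simp only [mul_one, cG]
    have := Finset.le_sup' (fun i => -G i i) (Finset.mem_univ i)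
    linarith
  · simp only [if_neg hij, mul_zero, add_zero]
    exact hG.1 i j hij

lemma AG_diag_pos {G : Matrix E E ℝ} (i : E) :
    0 < (G + cG G • (1 : Matrix E E ℝ)) i i := by
  simp only [Matrix.add_apply, Matrix.smul_apply, Matrix.one_apply_eq, smul_eq_mul, mul_one, cG]
  have := Finset.le_sup' (fun i => -G i i) (Finset.mem_univ i)
  linarith

lemma Pi_nonneg {G : Matrix E E ℝ} (hG : IsGenerator G) {t : ℝ} (ht : 0 ≤ t) (i j : E) :
    0 ≤ exp (t • G) i j := by
  rw [gen_exp_decomp G (cG G) t]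
  simp only [Matrix.smul_apply, smul_eq_mul]
  refine mul_nonneg (Real.exp_pos _).le (exp_entry_nonneg (fun i j => ?_) i j)
  simpa using smul_nonneg ht (AG_nonneg hG i j)

lemma Pi_rowsum {G : Matrix E E ℝ} (hG : IsGenerator G) (t : ℝ) (i : E) :
    ∑ j, exp (t • G) i j = 1 := by
  refine exp_rowsum (fun i => ?_) i
  simp [Matrix.smul_apply, ← Finset.mul_sum, hG.2 i]

lemma Pi_add (G : Matrix E E ℝ) (s t : ℝ) :
    exp ((s + t) • G) = exp (s • G) * exp (t • G) := by
  rw [add_smul]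
  exact Matrix.exp_add_of_commute _ _ (((Commute.refl G).smul_left s).smul_right t)

lemma Pi_one_pos {G : Matrix E E ℝ} (hG : IsGenerator G) (hirr : GenIrreducible G) (i j : E) :
    0 < exp ((1 : ℝ) • G) i j := by
  rw [gen_exp_decomp G (cG G) 1]
  simp only [Matrix.smul_apply, smul_eq_mul, one_smul]
  obtain ⟨N, hN1, k, h0, hkN, hprod⟩ := hirr i j
  refine mul_pos (Real.exp_pos _) (exp_entry_pos (AG_nonneg hG) N k h0 hkN ?_)
  refine Finset.prod_pos fun l hl => ?_
  by_cases hll : k l = k (l + 1)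
  · rw [hll]; exact AG_diag_pos _
  · have hne : G (k l) (k (l + 1)) ≠ 0 := Finset.prod_ne_zero_iff.mp hprod l hl
    have hpos : 0 < G (k l) (k (l + 1)) := lt_of_le_of_ne (hG.1 _ _ hll) (Ne.symm hne)
    simpa [Matrix.add_apply, Matrix.smul_apply, Matrix.one_apply, if_neg hll] using hpos

end Helpers

/-- Ergodic theorem: for an irreducible generator on a nonempty finite state
space, the entries of `exp (t • G)` converge, as `t → ∞`, to a probability
distribution `α` independently of the starting state. -/
theorem ergodic_limit_exists {E : Type*} [Fintype E] [DecidableEq E] [Nonempty E]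
    (G : Matrix E E ℝ) (hG : IsGenerator G) (hirr : GenIrreducible G) :
    ∃ α : E → ℝ, (∀ j, 0 ≤ α j) ∧ (∑ j, α j = 1) ∧
      ∀ i j : E, Tendsto (fun t : ℝ => NormedSpace.exp (t • G) i j) atTop (𝓝 (α j)) := by
  classical
  obtain ⟨i0⟩ := ‹Nonempty E›
  set P : ℝ → Matrix E E ℝ := fun t => NormedSpace.exp (t • G) with hP
  have hpos : ∀ t : ℝ, 0 ≤ t → ∀ i j, 0 ≤ P t i j := fun t ht i j => Pi_nonneg hG ht i j
  have hrow : ∀ (t : ℝ) i, ∑ j, P t i j = 1 := fun t i => Pi_rowsum hG t i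
  have hsemi : ∀ (s t : ℝ) i j, P (s + t) i j = ∑ k, P s i k * P t k j := by
    intro s t i j
    show (NormedSpace.exp ((s + t) • G)) i j = _
    rw [Pi_add G s t, Matrix.mul_apply]
  have h1pos : ∀ i j, 0 < P 1 i j := fun i j => Pi_one_pos hG hirr i j
  set M : ℝ → E → ℝ := fun t j => Finset.univ.sup' Finset.univ_nonempty (fun i => P t i j)
    with hM
  set m : ℝ → E → ℝ := fun t j => Finset.univ.inf' Finset.univ_nonempty (fun i => P t i j)
    with hm
  have hbound : ∀ (t : ℝ) j i, P t i j ≤ M t j := by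
    intro t j i
    rw [hM]
    exact Finset.le_sup' (fun i => P t i j) (Finset.mem_univ i)
  have hboundm : ∀ (t : ℝ) j i, m t j ≤ P t i j := by
    intro t j i
    rw [hm]
    exact Finset.inf'_le (fun i => P t i j) (Finset.mem_univ i)
  have hmM : ∀ (t : ℝ) j, m t j ≤ M t j := fun t j => le_trans (hboundm t j i0) (hbound t j i0)
  have hManti : ∀ s : ℝ, 0 ≤ s → ∀ (t : ℝ) j, M (s + t) j ≤ M t j := by
    intro s hs t j
    apply Finset.sup'_le
    intro i _
    rw [hsemi s t i j]
    calc ∑ k, P s i k * P t k j ≤ ∑ k, P s i k * M t j :=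
          Finset.sum_le_sum fun k _ => mul_le_mul_of_nonneg_left (hbound t j k) (hpos s hs i k)
      _ = M t j := by rw [← Finset.sum_mul, hrow s i, one_mul]
  have hmmono : ∀ s : ℝ, 0 ≤ s → ∀ (t : ℝ) j, m t j ≤ m (s + t) j := by
    intro s hs t j
    apply Finset.le_inf'
    intro i _
    rw [hsemi s t i j]
    calc m t j = ∑ k, P s i k * m t j := by rw [← Finset.sum_mul, hrow s i, one_mul]
      _ ≤ ∑ k, P s i k * P t k j :=
          Finset.sum_le_sum fun k _ => mul_le_mul_of_nonneg_left (hboundm t j k) (hpos s hs i k)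
  set δ : ℝ := Finset.univ.inf' Finset.univ_nonempty (fun p : E × E => P 1 p.1 p.2) with hδ
  have hδpos : 0 < δ := by
    rw [hδ, Finset.lt_inf'_iff]
    exact fun p _ => h1pos p.1 p.2
  have hδle : ∀ i k, δ ≤ P 1 i k := fun i k => Finset.inf'_le _ (Finset.mem_univ (i, k))
  have hstep : ∀ t : ℝ, 0 ≤ t → ∀ j,
      M (1 + t) j - m (1 + t) j ≤ (1 - 2 * δ) * (M t j - m t j) := by
    intro t ht j
    obtain ⟨kmin, _, hkmin⟩ := Finset.exists_mem_eq_inf' (Finset.univ_nonempty (α := E))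
      (fun i => P t i j)
    obtain ⟨kmax, _, hkmax⟩ := Finset.exists_mem_eq_sup' (Finset.univ_nonempty (α := E))
      (fun i => P t i j)
    have hMstep : M (1 + t) j ≤ M t j - δ * (M t j - m t j) := by
      apply Finset.sup'_le
      intro i _
      rw [hsemi 1 t i j]
      have hsplit : ∑ k, P 1 i k * P t k j =
          P 1 i kmin * P t kmin j + ∑ k ∈ Finset.univ.erase kmin, P 1 i k * P t k j :=
        (Finset.add_sum_erase _ _ (Finset.mem_univ kmin)).symm
      have herase : ∑ k ∈ Finset.univ.erase kmin, P 1 i k = 1 - P 1 i kmin := by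
        rw [Finset.sum_erase_eq_sub (Finset.mem_univ kmin), hrow 1 i]
      have hb2 : ∑ k ∈ Finset.univ.erase kmin, P 1 i k * P t k j ≤
          (1 - P 1 i kmin) * M t j := by
        rw [← herase, Finset.sum_mul]
        exact Finset.sum_le_sum fun k _ =>
          mul_le_mul_of_nonneg_left (hbound t j k) (hpos 1 one_pos.le i k)
      have hmin : P t kmin j = m t j := hkmin.symm
      have hp : δ ≤ P 1 i kmin := hδle i kmin
      have hd : m t j ≤ M t j := hmM t j
      rw [hsplit, hmin]
      nlinarith [hb2]
    have hmstep : m t j + δ * (M t j - m t j) ≤ m (1 + t) j := by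
      apply Finset.le_inf'
      intro i _
      rw [hsemi 1 t i j]
      have hsplit : ∑ k, P 1 i k * P t k j =
          P 1 i kmax * P t kmax j + ∑ k ∈ Finset.univ.erase kmax, P 1 i k * P t k j :=
        (Finset.add_sum_erase _ _ (Finset.mem_univ kmax)).symm
      have herase : ∑ k ∈ Finset.univ.erase kmax, P 1 i k = 1 - P 1 i kmax := by
        rw [Finset.sum_erase_eq_sub (Finset.mem_univ kmax), hrow 1 i]
      have hb2 : (1 - P 1 i kmax) * m t j ≤
          ∑ k ∈ Finset.univ.erase kmax, P 1 i k * P t k j := by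
        rw [← herase, Finset.sum_mul]
        exact Finset.sum_le_sum fun k _ =>
          mul_le_mul_of_nonneg_left (hboundm t j k) (hpos 1 one_pos.le i k)
      have hmax : P t kmax j = M t j := hkmax.symm
      have hp : δ ≤ P 1 i kmax := hδle i kmax
      have hp1 : P 1 i kmax ≤ 1 := by
        have h := Finset.single_le_sum (f := fun k => P 1 i k)
          (fun k _ => hpos 1 one_pos.le i k) (Finset.mem_univ kmax)
        rwa [hrow 1 i] at h
      have hd : m t j ≤ M t j := hmM t j
      rw [hsplit, hmax]
      nlinarith [hb2]
    linarith
  set c : ℝ := max (1 - 2 * δ) 0 with hc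
  have hc0 : 0 ≤ c := le_max_right _ _
  have hc1 : c < 1 := max_lt (by linarith) one_pos
  have hdn : ∀ j (n : ℕ), M (n : ℝ) j - m (n : ℝ) j ≤ c ^ n * (M 0 j - m 0 j) := by
    intro j n
    induction n with
    | zero => simp
    | succ n ih =>
      have hcast : ((n + 1 : ℕ) : ℝ) = 1 + (n : ℝ) := by push_cast; ring
      have h1 := hstep (n : ℝ) (Nat.cast_nonneg n) j
      rw [hcast]
      calc M (1 + (n : ℝ)) j - m (1 + (n : ℝ)) j ≤ (1 - 2 * δ) * (M (n : ℝ) j - m (n : ℝ) j) :=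
            h1
        _ ≤ c * (M (n : ℝ) j - m (n : ℝ) j) :=
            mul_le_mul_of_nonneg_right (le_max_left _ _) (by linarith [hmM (n : ℝ) j])
        _ ≤ c * (c ^ n * (M 0 j - m 0 j)) := mul_le_mul_of_nonneg_left ih hc0
        _ = c ^ (n + 1) * (M 0 j - m 0 j) := by ring
  have hmmono' : ∀ j, Monotone fun t => m t j := by
    intro j a b hab
    have := hmmono (b - a) (sub_nonneg.mpr hab) a j
    rwa [sub_add_cancel] at this
  have hManti' : ∀ j, Antitone fun t => M t j := by
    intro j a b hab
    have := hManti (b - a) (sub_nonneg.mpr hab) a j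
    rwa [sub_add_cancel] at this
  have hub : ∀ j (t : ℝ), m t j ≤ M 0 j := by
    intro j t
    rcases le_total t 0 with h | h
    · exact le_trans (hmmono' j h) (hmM 0 j)
    · exact le_trans (hmM t j) (hManti' j h)
  have hlb : ∀ j (t : ℝ), m 0 j ≤ M t j := by
    intro j t
    rcases le_total t 0 with h | h
    · exact le_trans (hmM 0 j) (hManti' j h)
    · exact le_trans (hmmono' j h) (hmM t j)
  set α : E → ℝ := fun j => ⨆ t : ℝ, m t j with hα
  set β : E → ℝ := fun j => ⨅ t : ℝ, M t j with hβ
  have hmlim : ∀ j, Tendsto (fun t => m t j) atTop (𝓝 (α j)) := by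
    intro j
    exact tendsto_atTop_ciSup (hmmono' j) ⟨M 0 j, by rintro x ⟨t, rfl⟩; exact hub j t⟩
  have hMlim : ∀ j, Tendsto (fun t => M t j) atTop (𝓝 (β j)) := by
    intro j
    exact tendsto_atTop_ciInf (hManti' j) ⟨m 0 j, by rintro x ⟨t, rfl⟩; exact hlb j t⟩
  have hβα : ∀ j, β j = α j := by
    intro j
    have h1 : Tendsto (fun n : ℕ => M (n : ℝ) j - m (n : ℝ) j) atTop (𝓝 (β j - α j)) :=
      ((hMlim j).comp tendsto_natCast_atTop_atTop).sub
        ((hmlim j).comp tendsto_natCast_atTop_atTop)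
    have h2 : Tendsto (fun n : ℕ => c ^ n * (M 0 j - m 0 j)) atTop (𝓝 0) := by
      simpa using (tendsto_pow_atTop_nhds_zero_of_lt_one hc0 hc1).mul_const (M 0 j - m 0 j)
    have h3 : β j - α j ≤ 0 := le_of_tendsto_of_tendsto' h1 h2 (hdn j)
    have h4 : α j ≤ β j := le_of_tendsto_of_tendsto' (hmlim j) (hMlim j) fun t => hmM t j
    linarith
  have hconv : ∀ i j, Tendsto (fun t : ℝ => P t i j) atTop (𝓝 (α j)) := by
    intro i j
    have hMlim' : Tendsto (fun t => M t j) atTop (𝓝 (α j)) := by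
      rw [← hβα j]; exact hMlim j
    exact tendsto_of_tendsto_of_tendsto_of_le_of_le (hmlim j) hMlim'
      (fun t => hboundm t j i) (fun t => hbound t j i)
  refine ⟨α, ?_, ?_, hconv⟩
  · intro j
    refine ge_of_tendsto (hmlim j) ?_
    filter_upwards [eventually_ge_atTop (0 : ℝ)] with t ht
    rw [hm]
    exact Finset.le_inf' _ _ fun i _ => hpos t ht i j
  · have hsum : Tendsto (fun t : ℝ => ∑ j, P t i0 j) atTop (𝓝 (∑ j, α j)) :=
      tendsto_finset_sum _ fun j _ => hconv i0 j
    have hone : Tendsto (fun t : ℝ => ∑ j, P t i0 j) atTop (𝓝 1) := by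
      have : (fun t : ℝ => ∑ j, P t i0 j) = fun _ => (1 : ℝ) := funext fun t => hrow t i0
      rw [this]
      exact tendsto_const_nhds
    exact tendsto_nhds_unique hsum hone
end

section
/- Let E be a nonempty finite state space and G an irreducible generator on E. If α is the probability distribution on E such that exp(tG)(i,j) → α(j) as t → ∞ for every i, j ∈ E, then α is stationary: the row vector α satisfies α G = 0, i.e. ∑_{i∈E} α(i) G(i,j) = 0 for every j ∈ E. -/
open Matrix Filter Topology

/-- Entrywise derivative of the matrix exponential. -/
lemma hasDerivAt_exp_entry {E : Type*} [Fintype E] [DecidableEq E]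
    (G : Matrix E E ℝ) (s : ℝ) (k j : E) :
    HasDerivAt (fun u : ℝ => NormedSpace.exp (u • G) k j)
      ((NormedSpace.exp (s • G) * G) k j) s := by
  rw [hasDerivAt_iff_tendsto_slope]
  letI : SeminormedRing (Matrix E E ℝ) := Matrix.linftyOpSemiNormedRing
  letI : NormedRing (Matrix E E ℝ) := Matrix.linftyOpNormedRing
  letI : NormedAlgebra ℝ (Matrix E E ℝ) := Matrix.linftyOpNormedAlgebra
  have h : Tendsto (slope (fun u : ℝ => NormedSpace.exp (u • G)) s) (𝓝[≠] s)
      (𝓝 (NormedSpace.exp (s • G) * G)) :=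
    hasDerivAt_iff_tendsto_slope.mp (hasDerivAt_exp_smul_const G s)
  have h2 : Tendsto (fun u : ℝ => slope (fun u : ℝ => NormedSpace.exp (u • G)) s u k j)
      (𝓝[≠] s) (𝓝 ((NormedSpace.exp (s • G) * G) k j)) := by
    have hk : Tendsto (fun u : ℝ => slope (fun u : ℝ => NormedSpace.exp (u • G)) s u k)
        (𝓝[≠] s) (𝓝 ((NormedSpace.exp (s • G) * G) k)) :=
      ((continuous_apply k).tendsto _).comp h
    exact ((continuous_apply j).tendsto _).comp hk
  refine h2.congr fun u => ?_
  simp [slope, Matrix.smul_apply, Matrix.sub_apply, smul_eq_mul]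

/-- If `α` is a probability distribution which is the limit of `exp (t • G)` for an
irreducible generator `G`, then `α` is stationary: `α G = 0` as a row vector. -/
theorem ergodic_limit_is_stationary {E : Type*} [Fintype E] [DecidableEq E] [Nonempty E]
    (G : Matrix E E ℝ) (hG : IsGenerator G) (hirr : GenIrreducible G)
    (α : E → ℝ) (hα₀ : ∀ j, 0 ≤ α j) (hα₁ : ∑ j, α j = 1)
    (hlim : ∀ i j : E, Tendsto (fun t : ℝ => NormedSpace.exp (t • G) i j) atTop (𝓝 (α j))) :
    ∀ j : E, ∑ i, α i * G i j = 0 := by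
  intro j
  obtain ⟨i⟩ := ‹Nonempty E›
  -- Step 1: α is invariant for exp (s • G) for every s.
  have key : ∀ s : ℝ, ∑ k, α k * NormedSpace.exp (s • G) k j = α j := by
    intro s
    have h1 : Tendsto (fun t : ℝ => NormedSpace.exp ((t + s) • G) i j) atTop (𝓝 (α j)) :=
      (hlim i j).comp (tendsto_atTop_add_const_right _ s tendsto_id)
    have h2 : ∀ t : ℝ, NormedSpace.exp ((t + s) • G) i j
        = ∑ k, NormedSpace.exp (t • G) i k * NormedSpace.exp (s • G) k j := by
      intro t
      rw [add_smul, Matrix.exp_add_of_commute (t • G) (s • G) (((Commute.refl G).smul_left t).smul_right s),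
        Matrix.mul_apply]
    have h3 : Tendsto (fun t : ℝ => ∑ k, NormedSpace.exp (t • G) i k *
        NormedSpace.exp (s • G) k j) atTop (𝓝 (∑ k, α k * NormedSpace.exp (s • G) k j)) :=
      tendsto_finset_sum _ fun k _ => (hlim i k).mul_const _
    exact tendsto_nhds_unique h3 (by simpa only [h2] using h1)
  -- Step 2: differentiate at s = 0.
  have hconst : HasDerivAt (fun s : ℝ => ∑ k, α k * NormedSpace.exp (s • G) k j) 0 0 := by
    have : (fun s : ℝ => ∑ k, α k * NormedSpace.exp (s • G) k j) = fun _ => α j :=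
      funext key
    rw [this]
    exact hasDerivAt_const _ _
  have hderiv : HasDerivAt (fun s : ℝ => ∑ k, α k * NormedSpace.exp (s • G) k j)
      (∑ k, α k * (NormedSpace.exp ((0 : ℝ) • G) * G) k j) 0 :=
    HasDerivAt.fun_sum fun k _ => (hasDerivAt_exp_entry G 0 k j).const_mul (α k)
  have h0 : (∑ k, α k * (NormedSpace.exp ((0 : ℝ) • G) * G) k j) = ∑ k, α k * G k j := by
    simp [zero_smul, NormedSpace.exp_zero]
  rw [← h0]
  exact hderiv.unique hconst
end

section
/- Let E be a nonempty finite state space and G an irreducible generator on E. Then the stationary probability distribution is unique: if α and β are two probability distributions on E with α G = 0 and β G = 0 (as row vectors), then α = β. -/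
open Matrix Filter Topology

/-- For an irreducible generator on a nonempty finite state space, the stationary
probability distribution is unique. -/
theorem stationary_distribution_unique {E : Type*} [Fintype E] [DecidableEq E] [Nonempty E]
    (G : Matrix E E ℝ) (hG : IsGenerator G) (hirr : GenIrreducible G)
    (α β : E → ℝ)
    (hα₀ : ∀ j, 0 ≤ α j) (hα₁ : ∑ j, α j = 1) (hα : ∀ j, ∑ i, α i * G i j = 0)
    (hβ₀ : ∀ j, 0 ≤ β j) (hβ₁ : ∑ j, β j = 1) (hβ : ∀ j, ∑ i, β i * G i j = 0) :
    α = β := by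
  obtain ⟨hGoff, hGrow⟩ := hG
  set lam : ℝ := 1 + ∑ i, |G i i| with hlam
  have hlampos : 0 < lam := by
    have : (0:ℝ) ≤ ∑ i, |G i i| := Finset.sum_nonneg fun i _ => abs_nonneg _
    simp only [hlam]; linarith
  have hdiag : ∀ i, -G i i < lam := by
    intro i
    have h1 : |G i i| ≤ ∑ k, |G k k| :=
      Finset.single_le_sum (f := fun k => |G k k|) (fun k _ => abs_nonneg _) (Finset.mem_univ i)
    have h2 := neg_le_abs (G i i)
    simp only [hlam]; linarith
  set P : Matrix E E ℝ := Matrix.of fun i j => (if i = j then (1:ℝ) else 0) + lam⁻¹ * G i j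
    with hP
  have hPapp : ∀ i j, P i j = (if i = j then (1:ℝ) else 0) + lam⁻¹ * G i j := fun i j => rfl
  have hPdiag : ∀ i, 0 < P i i := by
    intro i
    have he : P i i = lam⁻¹ * (lam + G i i) := by
      rw [hPapp]; field_simp; simp
    rw [he]
    exact mul_pos (inv_pos.2 hlampos) (by linarith [hdiag i])
  have hPnn : ∀ i j, 0 ≤ P i j := by
    intro i j
    by_cases h : i = j
    · subst h; exact (hPdiag i).le
    · rw [hPapp]; simp only [if_neg h, zero_add]
      exact mul_nonneg (inv_pos.2 hlampos).le (hGoff i j h)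
  have hPoff : ∀ i j, i ≠ j → G i j ≠ 0 → 0 < P i j := by
    intro i j h hne
    rw [hPapp]; simp only [if_neg h, zero_add]
    exact mul_pos (inv_pos.2 hlampos) (lt_of_le_of_ne (hGoff i j h) (Ne.symm hne))
  have hProw : ∀ i, ∑ j, P i j = 1 := by
    intro i
    simp only [hPapp]
    rw [Finset.sum_add_distrib, ← Finset.mul_sum, hGrow i]
    simp
  -- one-step stationarity
  have hstatP : ∀ v : E → ℝ, (∀ j, ∑ i, v i * G i j = 0) → ∀ j, ∑ i, v i * P i j = v j := by
    intro v hv j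
    have he : ∑ i, v i * P i j
        = (∑ i, v i * (if i = j then (1:ℝ) else 0)) + lam⁻¹ * ∑ i, v i * G i j := by
      rw [Finset.mul_sum, ← Finset.sum_add_distrib]
      refine Finset.sum_congr rfl fun i _ => ?_
      rw [hPapp]; ring
    rw [he, hv j]
    simp [Finset.sum_ite_eq']
  -- nonnegativity of powers
  have hpow_nn : ∀ m, ∀ i j, 0 ≤ (P ^ m) i j := by
    intro m
    induction m with
    | zero => intro i j; simp [Matrix.one_apply]; positivity
    | succ m ih =>
        intro i j
        rw [pow_succ, Matrix.mul_apply]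
        exact Finset.sum_nonneg fun k _ => mul_nonneg (ih i k) (hPnn k j)
  -- positivity of powers is monotone
  have hpow_mono : ∀ N M, N ≤ M → ∀ i j, 0 < (P ^ N) i j → 0 < (P ^ M) i j := by
    intro N M hNM
    induction M, hNM using Nat.le_induction with
    | base => exact fun i j h => h
    | succ M hNM ih =>
        intro i j h
        rw [pow_succ, Matrix.mul_apply]
        have h1 : 0 < (P ^ M) i j * P j j := mul_pos (ih i j h) (hPdiag j)
        calc (0:ℝ) < (P ^ M) i j * P j j := h1
          _ ≤ ∑ k, (P ^ M) i k * P k j :=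
            Finset.single_le_sum (f := fun k => (P ^ M) i k * P k j)
              (fun k _ => mul_nonneg (hpow_nn M i k) (hPnn k j)) (Finset.mem_univ j)
  -- paths give positive power entries
  have hpath : ∀ (N : ℕ) (k : ℕ → E),
      (∏ l ∈ Finset.range N, G (k l) (k (l + 1))) ≠ 0 → 0 < (P ^ N) (k 0) (k N) := by
    intro N
    induction N with
    | zero => intro k _; simp [Matrix.one_apply]
    | succ N ih =>
        intro k hprod
        rw [Finset.prod_range_succ] at hprod
        obtain ⟨h1, h2⟩ := mul_ne_zero_iff.1 hprod
        have hstep : 0 < P (k N) (k (N + 1)) := by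
          by_cases h : k N = k (N + 1)
          · rw [h]; exact hPdiag _
          · exact hPoff _ _ h h2
        rw [pow_succ, Matrix.mul_apply]
        calc (0:ℝ) < (P ^ N) (k 0) (k N) * P (k N) (k (N + 1)) :=
              mul_pos (ih k h1) hstep
          _ ≤ ∑ m, (P ^ N) (k 0) m * P m (k (N + 1)) :=
            Finset.single_le_sum (f := fun m => (P ^ N) (k 0) m * P m (k (N + 1)))
              (fun m _ => mul_nonneg (hpow_nn N _ m) (hPnn m _)) (Finset.mem_univ (k N))
  have hexN : ∀ i j : E, ∃ N : ℕ, 0 < (P ^ N) i j := by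
    intro i j
    obtain ⟨N, _, k, hk0, hkN, hprod⟩ := hirr i j
    exact ⟨N, by rw [← hk0, ← hkN]; exact hpath N k hprod⟩
  -- choose a uniform power
  set Nf : E × E → ℕ := fun p => (hexN p.1 p.2).choose with hNf
  set n : ℕ := Finset.univ.sup Nf with hn
  have hQpos : ∀ i j, 0 < (P ^ n) i j := by
    intro i j
    exact hpow_mono (Nf (i, j)) n (Finset.le_sup (Finset.mem_univ (i, j))) i j
      (hexN i j).choose_spec
  -- row sums of powers
  have hQrow : ∀ m i, ∑ j, (P ^ m) i j = 1 := by
    intro m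
    induction m with
    | zero => intro i; simp [Matrix.one_apply]
    | succ m ih =>
        intro i
        calc ∑ j, (P ^ (m + 1)) i j = ∑ j, ∑ k, (P ^ m) i k * P k j := by
              simp [pow_succ, Matrix.mul_apply]
          _ = ∑ k, (P ^ m) i k * ∑ j, P k j := by
              rw [Finset.sum_comm]; simp [Finset.mul_sum]
          _ = 1 := by simp [hProw, ih i]
  -- stationarity for powers
  have hstatpow : ∀ v : E → ℝ, (∀ j, ∑ i, v i * P i j = v j) →
      ∀ m j, ∑ i, v i * (P ^ m) i j = v j := by
    intro v hv m
    induction m with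
    | zero => intro j; simp [Matrix.one_apply, Finset.sum_ite_eq']
    | succ m ih =>
        intro j
        calc ∑ i, v i * (P ^ (m + 1)) i j
            = ∑ i, ∑ k, v i * ((P ^ m) i k * P k j) := by
              simp [pow_succ, Matrix.mul_apply, Finset.mul_sum]
          _ = ∑ k, (∑ i, v i * (P ^ m) i k) * P k j := by
              rw [Finset.sum_comm]
              refine Finset.sum_congr rfl fun k _ => ?_
              rw [Finset.sum_mul]
              refine Finset.sum_congr rfl fun i _ => by ring
          _ = ∑ k, v k * P k j := by
              refine Finset.sum_congr rfl fun k _ => by rw [ih k]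
          _ = v j := hv j
  -- the difference vector
  set γ : E → ℝ := fun i => α i - β i with hγ
  have hγsum : ∑ i, γ i = 0 := by
    simp only [hγ]
    rw [Finset.sum_sub_distrib, hα₁, hβ₁]; ring
  have hγP : ∀ j, ∑ i, γ i * P i j = γ j := by
    intro j
    have hA := hstatP α hα j
    have hB := hstatP β hβ j
    simp only [hγ, sub_mul]
    rw [Finset.sum_sub_distrib, hA, hB]
  set Q : Matrix E E ℝ := P ^ n with hQdef
  have hγQ : ∀ j, ∑ i, γ i * Q i j = γ j := fun j => hstatpow γ hγP n j
  by_contra hne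
  have hex0 : ∃ a, γ a ≠ 0 := by
    by_contra h
    push_neg at h
    exact hne (funext fun i => by have := h i; simp only [hγ] at this; linarith)
  obtain ⟨a0, ha0⟩ := hex0
  have hexpos : ∃ a, 0 < γ a := by
    by_contra h
    push_neg at h
    have h1 : γ a0 < 0 := lt_of_le_of_ne (h a0) ha0
    have : ∑ i, γ i < ∑ i, (0:ℝ) :=
      Finset.sum_lt_sum (fun i _ => h i) ⟨a0, Finset.mem_univ a0, h1⟩
    simp [hγsum] at this
  have hexneg : ∃ b, γ b < 0 := by
    by_contra h
    push_neg at h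
    obtain ⟨a, ha⟩ := hexpos
    have : ∑ i, (0:ℝ) < ∑ i, γ i :=
      Finset.sum_lt_sum (fun i _ => h i) ⟨a, Finset.mem_univ a, ha⟩
    simp [hγsum] at this
  obtain ⟨a, ha⟩ := hexpos
  obtain ⟨b, hb⟩ := hexneg
  have hstrict : ∀ j, |γ j| < ∑ i, |γ i| * Q i j := by
    intro j
    rw [← hγQ j]
    have h1 : ∑ i, γ i * Q i j < ∑ i, |γ i| * Q i j := by
      refine Finset.sum_lt_sum
        (fun i _ => mul_le_mul_of_nonneg_right (le_abs_self _) (hQpos i j).le)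
        ⟨b, Finset.mem_univ b, ?_⟩
      exact mul_lt_mul_of_pos_right (lt_of_lt_of_le hb (by positivity)) (hQpos b j)
    have h2' : ∑ i, (-γ i) * Q i j < ∑ i, |γ i| * Q i j := by
      refine Finset.sum_lt_sum
        (fun i _ => mul_le_mul_of_nonneg_right (neg_le_abs _) (hQpos i j).le)
        ⟨a, Finset.mem_univ a, ?_⟩
      refine mul_lt_mul_of_pos_right ?_ (hQpos a j)
      have := le_abs_self (γ a); linarith
    have h2 : -(∑ i, γ i * Q i j) < ∑ i, |γ i| * Q i j := by
      have he : -(∑ i, γ i * Q i j) = ∑ i, (-γ i) * Q i j := by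
        rw [← Finset.sum_neg_distrib]
        exact Finset.sum_congr rfl fun i _ => by ring
      rw [he]; exact h2'
    exact abs_lt.2 ⟨by linarith, h1⟩
  have hfinal : ∑ j, |γ j| < ∑ j, ∑ i, |γ i| * Q i j :=
    Finset.sum_lt_sum_of_nonempty Finset.univ_nonempty (fun j _ => hstrict j)
  have heq : ∑ j, ∑ i, |γ i| * Q i j = ∑ i, |γ i| := by
    rw [Finset.sum_comm]
    simp only [← Finset.mul_sum]
    refine Finset.sum_congr rfl fun i _ => ?_
    rw [hQdef, hQrow n i, mul_one]
  rw [heq] at hfinal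
  exact absurd hfinal (lt_irrefl _)
end

section
/- Let E be a finite state space and G a generator on E. Then for every t ≥ 0, all entries of exp(tG) are nonnegative: exp(tG)(i,j) ≥ 0 for all i, j ∈ E. Together with the row sums being 1, this makes Π_t = exp(tG) a stochastic matrix for every t ≥ 0. -/
open Matrix Filter Topology

lemma pow_entries_nonneg' {E : Type*} [Fintype E] [DecidableEq E] (A : Matrix E E ℝ)
    (hA : ∀ i j, 0 ≤ A i j) : ∀ n : ℕ, ∀ i j, 0 ≤ (A ^ n) i j := by
  intro n
  induction n with
  | zero =>
    intro i j
    rw [pow_zero]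
    rcases eq_or_ne i j with h | h <;> simp [Matrix.one_apply, h]
  | succ n ih =>
    intro i j
    rw [pow_succ, Matrix.mul_apply]
    exact Finset.sum_nonneg fun k _ => mul_nonneg (ih i k) (hA k j)

lemma exp_entries_nonneg' {E : Type*} [Fintype E] [DecidableEq E] (A : Matrix E E ℝ)
    (hA : ∀ i j, 0 ≤ A i j) : ∀ i j, 0 ≤ NormedSpace.exp A i j := by
  letI : SeminormedRing (Matrix E E ℝ) := Matrix.linftyOpSemiNormedRing
  letI : NormedRing (Matrix E E ℝ) := Matrix.linftyOpNormedRing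
  letI : NormedAlgebra ℝ (Matrix E E ℝ) := Matrix.linftyOpNormedAlgebra
  intro i j
  rw [NormedSpace.exp_eq_tsum (𝕂 := ℝ)]
  show 0 ≤ (∑' n : ℕ, (n.factorial : ℝ)⁻¹ • A ^ n) i j
  have hs : Summable fun n : ℕ => (n.factorial : ℝ)⁻¹ • A ^ n :=
    NormedSpace.expSeries_summable' (𝕂 := ℝ) A
  erw [tsum_apply hs, tsum_apply (Pi.summable.mp hs i)]
  refine tsum_nonneg fun n => ?_
  simp only [Matrix.smul_apply, smul_eq_mul]
  exact mul_nonneg (by positivity) (pow_entries_nonneg' A hA n i j)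

/-- For a generator `G` and `t ≥ 0`, all entries of `exp (t • G)` are nonnegative. -/
theorem exp_generator_entries_nonneg {E : Type*} [Fintype E] [DecidableEq E]
    (G : Matrix E E ℝ) (hG : IsGenerator G) :
    ∀ t : ℝ, 0 ≤ t → ∀ i j : E, 0 ≤ NormedSpace.exp (t • G) i j := by
  intro t ht i j
  by_cases hE : Nonempty E
  · haveI := hE
    obtain ⟨c, hc⟩ : ∃ c : ℝ, 0 ≤ c ∧ ∀ i, -G i i ≤ c := by
      obtain ⟨c0, hc0⟩ := Finite.exists_le (fun i : E => -G i i)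
      exact ⟨max c0 0, le_max_right _ _, fun i => (hc0 i).trans (le_max_left _ _)⟩
    set A : Matrix E E ℝ := t • G + (t * c) • (1 : Matrix E E ℝ) with hAdef
    have hAnn : ∀ i j, 0 ≤ A i j := by
      intro a b
      by_cases hab : a = b
      · subst hab
        simp only [hAdef, Matrix.add_apply, Matrix.smul_apply, Matrix.one_apply_eq,
          smul_eq_mul, mul_one]
        nlinarith [hc.2 a]
      · simp only [hAdef, Matrix.add_apply, Matrix.smul_apply, Matrix.one_apply_ne hab,
          smul_eq_mul, mul_zero, add_zero]
        exact mul_nonneg ht (hG.1 a b hab)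
    have hsplit : t • G = A + (-(t * c)) • (1 : Matrix E E ℝ) := by
      rw [hAdef, neg_smul]; abel
    have hcomm : Commute A ((-(t * c)) • (1 : Matrix E E ℝ)) :=
      (Commute.one_right A).smul_right (-(t * c))
    rw [hsplit, Matrix.exp_add_of_commute A _ hcomm]
    have h1 : NormedSpace.exp ((-(t * c)) • (1 : Matrix E E ℝ))
        = Real.exp (-(t * c)) • (1 : Matrix E E ℝ) := by
      have hd : (-(t * c)) • (1 : Matrix E E ℝ) = Matrix.diagonal (fun _ : E => -(t * c)) := by
        ext a b
        rcases eq_or_ne a b with h | h <;>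
          simp [Matrix.one_apply, Matrix.diagonal, h]
      rw [hd, Matrix.exp_diagonal]
      ext a b
      rcases eq_or_ne a b with h | h <;>
        simp [Matrix.one_apply, Matrix.diagonal, h, Real.exp_eq_exp_ℝ]
    rw [h1, Matrix.mul_apply]
    refine Finset.sum_nonneg fun k _ => ?_
    simp only [Matrix.smul_apply, Matrix.one_apply, smul_eq_mul]
    split_ifs with h
    · exact mul_nonneg (exp_entries_nonneg' A hAnn i k) (by positivity)
    · simp
  · exact absurd ⟨i⟩ hE
end
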